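/- In the N_K=N setting, the super derivative of the odd binomial satisfies D^i_Z (Z-W)^{j|J} = σ(e_i, J∖e_i)(Z-W)^{j|J∖e_i} + j σ(e_i,J)(Z-W)^{j-1|J∪e_i} for all j ∈ ℤ, where D^i_Z = ∂_{θ^i} + θ^i ∂_z, (Z-W)^{j|J} = (z-w-Σ_k θ^kζ^k)^j ∏_{i∈J}(θ^i-ζ^i) (with negative powers expanded via the geometric series), and σ(e_i,K) is the Grassmann sign (zero if i∉K for the first term, i∈J makes second term zero). -/

import Mathlib

noncomputable section

/-- The Grassmann algebra on `k` groups of `N` odd generators (e.g. `θ`'s, `ζ`'s, `χ`'s),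
modelled as an exterior algebra. -/
abbrev Gr (k N : ℕ) : Type := ExteriorAlgebra ℂ (Fin k × Fin N → ℂ)

/-- The `i`-th odd generator of the `g`-th group. -/
def gv {k N : ℕ} (g : Fin k) (i : Fin N) : Gr k N :=
  ExteriorAlgebra.ι ℂ (Pi.single (g, i) (1:ℂ))

/-- The odd (left) derivative with respect to the `i`-th generator of group `g`,
realized as contraction in the exterior algebra. -/
def dgv {k N : ℕ} (g : Fin k) (i : Fin N) : Module.End ℂ (Gr k N) :=
  CliffordAlgebra.contractLeft (LinearMap.proj (g, i))

/-- Iterated odd derivative extracting the coefficient of the full top monomial of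
group `g` (applying `∂_1` first, then `∂_2`, etc.). -/
def resG {k N : ℕ} (g : Fin k) : Module.End ℂ (Gr k N) :=
  (((List.finRange N).map (dgv g)).reverse).prod

/-- The reordering sign `σ(I,J)` determined by `θ^I θ^J = σ(I,J) θ^{I∪J}` for disjoint
ordered subsets, and `0` otherwise. -/
def sgn {N : ℕ} (I J : Finset (Fin N)) : ℤ :=
  if Disjoint I J then (-1)^(((I ×ˢ J).filter (fun p => p.2 < p.1)).card) else 0

/-- Ordered (increasing) product of the elements `f i`, `i ∈ J`. -/
def oprod {k N : ℕ} (J : Finset (Fin N)) (f : Fin N → Gr k N) : Gr k N :=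
  ((J.sort (· ≤ ·)).map f).prod

namespace Stmt18

variable {N : ℕ}

/-- Formal distributions in the two supervariables `Z, W`. -/
abbrev Dist2 (N : ℕ) : Type := ℤ → ℤ → Gr 2 N

/-- The generalized binomial coefficient `m(m-1)⋯(m-r+1)/r!` for `m ∈ ℤ`. -/
def genChoose (m : ℤ) (r : ℕ) : ℂ :=
  (∏ t ∈ Finset.range r, ((m : ℂ) - t)) / (r.factorial : ℂ)

/-- Coefficient of `z^a w^b` in `i_{z,w}(z-w)^m` (expansion in `|z| > |w|`, i.e. the
geometric series in `w/z`). -/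
def izwC (m : ℤ) (a b : ℤ) : ℂ :=
  if 0 ≤ b ∧ a + b = m then (-1 : ℂ)^(b.toNat) * genChoose m b.toNat else 0

/-- `Σ_i θ^i ζ^i`. -/
def qq (N : ℕ) : Gr 2 N := ∑ i : Fin N, gv 0 i * gv 1 i

/-- `(θ-ζ)^J`. -/
def tK (J : Finset (Fin N)) : Gr 2 N := oprod J (fun i => gv 0 i - gv 1 i)

/-- The `N_K` binomial `(Z-W)^{j|J} = (z - w - Σθ^iζ^i)^j (θ-ζ)^J` for any `j ∈ ℤ`,
with negative powers expanded in the domain `|z| > |w|` (geometric series). -/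
def izwNK (N : ℕ) (j : ℤ) (J : Finset (Fin N)) : Dist2 N :=
  fun a b => ∑ r ∈ Finset.range (N + 1),
    ((-1 : ℂ)^r * genChoose j r * izwC (j - r) a b) • ((qq N)^r * tK J)

/-- The super derivative `D^i_Z = ∂_{θ^i} + θ^i ∂_z` on distributions. -/
def DZ (i : Fin N) (d : Dist2 N) : Dist2 N :=
  fun a b => dgv 0 i (d a b) + gv 0 i * (((a : ℂ) + 1) • d (a + 1) b)


section AuxLemmas

lemma gv_anticomm {k : ℕ} (g h : Fin k) (a b : Fin N) :
    gv g a * gv h b = -(gv h b * gv g a) :=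
  eq_neg_of_add_eq_zero_left (ExteriorAlgebra.ι_add_mul_swap _ _)

lemma gv_sq {k : ℕ} (g : Fin k) (a : Fin N) : gv g a * gv g a = 0 :=
  ExteriorAlgebra.ι_sq_zero _

lemma gv_gv_commute {k : ℕ} (g h : Fin k) (a b : Fin N) (y : Gr k N) :
    Commute (gv g a * gv h b) y := by
  induction y using CliffordAlgebra.induction with
  | algebraMap r => exact (Algebra.commutes r _).symm
  | ι m =>
    have h1 : gv g a * ExteriorAlgebra.ι ℂ m = -(ExteriorAlgebra.ι ℂ m * gv g a) :=
      eq_neg_of_add_eq_zero_left (ExteriorAlgebra.ι_add_mul_swap _ _)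
    have h2 : gv h b * ExteriorAlgebra.ι ℂ m = -(ExteriorAlgebra.ι ℂ m * gv h b) :=
      eq_neg_of_add_eq_zero_left (ExteriorAlgebra.ι_add_mul_swap _ _)
    show _ = _
    calc gv g a * gv h b * ExteriorAlgebra.ι ℂ m
        = gv g a * (gv h b * ExteriorAlgebra.ι ℂ m) := by rw [mul_assoc]
      _ = -(gv g a * ExteriorAlgebra.ι ℂ m * gv h b) := by
          rw [h2, mul_neg, mul_assoc]
      _ = ExteriorAlgebra.ι ℂ m * gv g a * gv h b := by
          rw [h1, neg_mul, neg_neg]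
      _ = ExteriorAlgebra.ι ℂ m * (gv g a * gv h b) := by rw [mul_assoc]
  | mul a b ha hb => exact ha.mul_right hb
  | add a b ha hb => exact ha.add_right hb

lemma qq_commute (y : Gr 2 N) : Commute (qq N) y :=
  Commute.sum_left _ _ _ fun i _ => gv_gv_commute 0 1 i i y

lemma dgv_gv_mul (g h : Fin 2) (i a : Fin N) (y : Gr 2 N) :
    dgv g i (gv h a * y) =
      (if (g, i) = (h, a) then y else 0) - gv h a * dgv g i y := by
  show CliffordAlgebra.contractLeft _ (CliffordAlgebra.ι _ _ * y) = _
  rw [CliffordAlgebra.contractLeft_ι_mul]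
  congr 1
  rw [LinearMap.proj_apply, Pi.single_apply]
  split <;> simp

lemma dgv_one (g : Fin 2) (i : Fin N) : dgv g i (1 : Gr 2 N) = 0 :=
  CliffordAlgebra.contractLeft_one _ _

lemma dgv_qq_mul (i : Fin N) (y : Gr 2 N) :
    dgv 0 i (qq N * y) = gv 1 i * y + qq N * dgv 0 i y := by
  rw [qq, Finset.sum_mul, map_sum]
  have : ∀ k : Fin N, dgv 0 i (gv 0 k * gv 1 k * y)
      = (if k = i then gv 1 i * y else 0) + gv 0 k * gv 1 k * dgv 0 i y := by
    intro k
    rw [mul_assoc, dgv_gv_mul, dgv_gv_mul, mul_sub, sub_sub_eq_add_sub, mul_assoc]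
    have h1 : ((if ((0:Fin 2), i) = ((1:Fin 2), k) then y else 0) : Gr 2 N) = 0 := by
      rw [if_neg]; simp [Prod.ext_iff, Fin.ext_iff]
    rw [h1, mul_zero, sub_zero]
    by_cases h : k = i
    · subst h; rw [if_pos rfl, if_pos rfl]
    · rw [if_neg (by simp [Prod.ext_iff, Ne.symm h]), if_neg h, zero_add]
  simp_rw [this]
  rw [Finset.sum_add_distrib, Finset.sum_ite_eq' Finset.univ i (fun _ => gv 1 i * y)]
  rw [if_pos (Finset.mem_univ i), ← Finset.sum_mul, ← qq]

lemma dgv_qq_pow_mul (i : Fin N) (r : ℕ) (y : Gr 2 N) :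
    dgv 0 i (qq N ^ r * y)
      = (r : ℂ) • (qq N ^ (r - 1) * (gv 1 i * y)) + qq N ^ r * dgv 0 i y := by
  induction r generalizing y with
  | zero => simp
  | succ r ih =>
    have e1 : qq N ^ (r+1) * y = qq N ^ r * (qq N * y) := by rw [pow_succ, mul_assoc]
    rw [e1, ih, dgv_qq_mul, mul_add]
    have h1 : gv 1 i * (qq N * y) = qq N * (gv 1 i * y) := by
      rw [← mul_assoc, ← (qq_commute (gv 1 i)).eq, mul_assoc]
    rw [h1]
    have h2 : (r:ℂ) • (qq N ^ (r-1) * (qq N * (gv 1 i * y)))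
        = (r:ℂ) • (qq N ^ r * (gv 1 i * y)) := by
      cases r with
      | zero => simp
      | succ r => rw [← mul_assoc, ← pow_succ, Nat.add_sub_cancel]
    have h3 : qq N ^ r * (qq N * dgv 0 i y) = qq N ^ (r+1) * dgv 0 i y := by
      rw [← mul_assoc, ← pow_succ]
    rw [h2, h3, Nat.add_sub_cancel, Nat.cast_succ, add_smul, one_smul]
    abel

lemma sq_zero_pow_binom (u w : Gr 2 N) (hc : w * u = u * w) (hw : w * w = 0) (m : ℕ) :
    (u + w)^(m+1) = u^(m+1) + (m+1 : ℂ) • (u^m * w) := by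
  induction m with
  | zero => simp
  | succ m ih =>
    rw [pow_succ, ih, add_mul, mul_add, mul_add, smul_mul_assoc, smul_mul_assoc,
      mul_assoc (u^m) w u, hc, ← mul_assoc, ← pow_succ, mul_assoc (u^m) w w, hw, mul_zero,
      smul_zero, add_zero, ← pow_succ]
    push_cast
    rw [add_smul, add_smul, one_smul]
    module

lemma gv_mul_w_zero (g : Fin 2) (i : Fin N) : gv g i * (gv 0 i * gv 1 i) = 0 := by
  fin_cases g
  · show gv 0 i * (gv 0 i * gv 1 i) = 0
    rw [← mul_assoc, gv_sq, zero_mul]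
  · show gv 1 i * (gv 0 i * gv 1 i) = 0
    rw [← mul_assoc, gv_anticomm 1 0, neg_mul, mul_assoc, gv_sq, mul_zero, neg_zero]

lemma w_sq (a : Fin N) : (gv 0 a * gv 1 a : Gr 2 N) * (gv 0 a * gv 1 a) = 0 := by
  rw [mul_assoc, gv_mul_w_zero 1 a, mul_zero]

lemma sum_sq_zero_pow (S : Finset (Fin N)) (m : ℕ) (h : S.card < m) :
    (∑ k ∈ S, gv 0 k * gv 1 k : Gr 2 N)^m = 0 := by
  induction S using Finset.induction_on generalizing m with
  | empty =>
    rw [Finset.sum_empty]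
    exact zero_pow (lt_of_le_of_lt (Nat.zero_le _) h).ne'
  | @insert a S ha ih =>
    obtain ⟨m, rfl⟩ : ∃ m', m = m' + 1 := ⟨m - 1, by omega⟩
    rw [Finset.sum_insert ha, add_comm, sq_zero_pow_binom _ _
      ((gv_gv_commute 0 1 a a _).eq) (w_sq a)]
    rw [Finset.card_insert_of_notMem ha] at h
    rw [ih m (by omega), ih (m+1) (by omega), zero_mul, smul_zero, add_zero]

lemma gv_mul_qq_pow_N (g : Fin 2) (i : Fin N) : gv g i * qq N ^ N = 0 := by
  have hN : 0 < N := i.pos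
  obtain ⟨n, rfl⟩ : ∃ n, N = n + 1 := ⟨N - 1, by omega⟩
  set u : Gr 2 (n+1) := ∑ k ∈ Finset.univ.erase i, gv 0 k * gv 1 k with hu
  have hq : qq (n+1) = u + gv 0 i * gv 1 i := by
    rw [qq, hu, Finset.sum_erase_add _ _ (Finset.mem_univ i)]
  have hun : u ^ (n+1) = 0 := sum_sq_zero_pow _ (n+1) (by
    rw [Finset.card_erase_of_mem (Finset.mem_univ i), Finset.card_univ, Fintype.card_fin]
    omega)
  have hcomm : Commute u (gv g i) :=
    Commute.sum_left _ _ _ (fun k _ => gv_gv_commute 0 1 k k _)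
  rw [hq, sq_zero_pow_binom u _ ((gv_gv_commute 0 1 i i u).eq) (w_sq i), hun, zero_add,
    mul_smul_comm, ← mul_assoc, ← (hcomm.pow_left n).eq, mul_assoc, gv_mul_w_zero,
    mul_zero, smul_zero]

/-- `θ^a - ζ^a`. -/
def xg {N : ℕ} (a : Fin N) : Gr 2 N := gv 0 a - gv 1 a

lemma xg_anticomm (a b : Fin N) : xg a * xg b = -(xg b * xg a) := by
  unfold xg
  simp only [sub_mul, mul_sub]
  rw [gv_anticomm 0 0 a b, gv_anticomm 0 1 a b, gv_anticomm 1 0 a b, gv_anticomm 1 1 a b]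
  abel

lemma xg_sq (a : Fin N) : xg a * xg a = 0 := by
  unfold xg
  simp only [sub_mul, mul_sub]
  rw [gv_sq, gv_sq, gv_anticomm 1 0 a a]
  abel

lemma dgv_xg_mul (i a : Fin N) (y : Gr 2 N) :
    dgv 0 i (xg a * y) = (if a = i then y else 0) - xg a * dgv 0 i y := by
  unfold xg
  rw [sub_mul, map_sub, dgv_gv_mul, dgv_gv_mul, sub_mul]
  have e1 : (if ((0:Fin 2), i) = ((1:Fin 2), a) then y else (0 : Gr 2 N)) = 0 := by
    rw [if_neg]
    intro h
    have h2 : (0 : Fin 2) = 1 := congrArg Prod.fst h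
    exact absurd h2 (by decide)
  have e0 : (if ((0:Fin 2), i) = ((0:Fin 2), a) then y else (0 : Gr 2 N))
      = if a = i then y else 0 := by
    by_cases hai : a = i
    · subst hai; simp
    · rw [if_neg (fun h => hai (congrArg Prod.snd h).symm), if_neg hai]
  rw [e1, e0]
  abel

lemma dgv_xg_prod_nmem (i : Fin N) (l : List (Fin N)) (h : i ∉ l) :
    dgv 0 i ((l.map xg).prod) = 0 := by
  induction l with
  | nil => simpa using dgv_one 0 i
  | cons a t ih =>
    rw [List.map_cons, List.prod_cons, dgv_xg_mul,
      if_neg (show ¬ a = i by rintro rfl; exact h List.mem_cons_self),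
      ih (fun ht => h (List.mem_cons_of_mem a ht)), mul_zero, zero_sub, neg_zero]

lemma move_prod (i : Fin N) (l : List (Fin N)) (hs : l.Pairwise (· ≤ ·)) (h : i ∉ l) :
    (((List.orderedInsert (· ≤ ·) i l).map xg).prod : Gr 2 N)
      = ((-1:ℂ))^((l.filter (fun b => b < i)).length) • (xg i * (l.map xg).prod) := by
  induction l with
  | nil => simp
  | cons a t ih =>
    by_cases hle : i ≤ a
    · rw [List.orderedInsert, if_pos hle]
      have hfil : (a :: t).filter (fun b => decide (b < i)) = [] := by
        rw [List.filter_eq_nil_iff]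
        intro b hb
        rcases List.mem_cons.mp hb with rfl | hbt
        · simpa using not_lt.mpr hle
        · exact by simpa using not_lt.mpr (hle.trans (List.rel_of_pairwise_cons hs hbt))
      rw [hfil, List.length_nil, pow_zero, one_smul, List.map_cons, List.prod_cons]
    · have hai : a < i := lt_of_not_ge hle
      have hia : i ∉ t := fun ht => h (List.mem_cons_of_mem a ht)
      rw [List.orderedInsert, if_neg hle, List.map_cons, List.prod_cons, ih hs.of_cons hia,
        List.filter_cons, if_pos (by simpa using hai), List.length_cons, mul_smul_comm,
        List.map_cons, List.prod_cons, ← mul_assoc, xg_anticomm a i, neg_mul, mul_assoc,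
        pow_succ, mul_comm ((-1:ℂ)^(t.filter (fun b => decide (b < i))).length) (-1),
        mul_smul, neg_one_smul, smul_neg]

open scoped List in
lemma sort_insert_eq (i : Fin N) (J : Finset (Fin N)) (h : i ∉ J) :
    (insert i J).sort (· ≤ ·) = List.orderedInsert (· ≤ ·) i (J.sort (· ≤ ·)) := by
  refine (fun hp h1 h2 => List.Perm.eq_of_pairwise' (r := ((· ≤ ·) : Fin N → Fin N → Prop)) h1 h2 hp) ?_ ?_ ?_
  · calc (insert i J).sort (· ≤ ·) ~ (insert i J).toList := Finset.sort_perm_toList _ _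
      _ ~ i :: J.toList := Finset.toList_insert h
      _ ~ i :: J.sort (· ≤ ·) := ((Finset.sort_perm_toList _ _).symm.cons i)
      _ ~ List.orderedInsert (· ≤ ·) i (J.sort (· ≤ ·)) :=
          (List.perm_orderedInsert _ _ _).symm
  · exact Finset.pairwise_sort _ _
  · exact (Finset.pairwise_sort _ _).orderedInsert i _

lemma length_filter_sort (i : Fin N) (J : Finset (Fin N)) :
    ((J.sort (· ≤ ·)).filter (fun b => b < i)).length = (J.filter (· < i)).card := by
  rw [← Multiset.coe_card, ← Multiset.filter_coe (· < i), Finset.sort_eq]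
  rfl

lemma sgn_singleton (i : Fin N) (J : Finset (Fin N)) (h : i ∉ J) :
    sgn {i} J = (-1:ℤ)^((J.filter (· < i)).card) := by
  rw [sgn, if_pos (Finset.disjoint_singleton_left.mpr h)]
  congr 1
  rw [Finset.singleton_product, Finset.filter_map, Finset.card_map]
  rfl

lemma sgn_sq (i : Fin N) (J : Finset (Fin N)) (h : i ∉ J) :
    (sgn {i} J) * sgn {i} J = 1 := by
  rw [sgn_singleton i J h, ← mul_pow]
  norm_num

lemma tK_insert (i : Fin N) (J : Finset (Fin N)) (h : i ∉ J) :
    xg i * tK J = ((sgn {i} J : ℤ) : ℂ) • tK (insert i J) := by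
  have hm : tK (insert i J) = ((-1:ℂ))^((J.filter (· < i)).card) • (xg i * tK J) := by
    have tK_def : ∀ K : Finset (Fin N), tK K = ((K.sort (· ≤ ·)).map xg).prod := fun _ => rfl
    rw [tK_def, sort_insert_eq i J h, move_prod i _ (Finset.pairwise_sort _ _)
      (fun hc => h (Finset.mem_sort (· ≤ ·) |>.mp hc)), length_filter_sort, tK_def]
  rw [hm, sgn_singleton i J h, smul_smul]
  push_cast
  rw [← mul_pow]
  norm_num

lemma dgv_tK_nmem (i : Fin N) (J : Finset (Fin N)) (h : i ∉ J) :
    dgv 0 i (tK J) = 0 :=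
  dgv_xg_prod_nmem i _ (fun hc => h (Finset.mem_sort (· ≤ ·) |>.mp hc))

lemma tK_mem_decomp (i : Fin N) (J : Finset (Fin N)) (h : i ∈ J) :
    tK J = ((sgn {i} (J.erase i) : ℤ) : ℂ) • (xg i * tK (J.erase i)) := by
  have h' : i ∉ J.erase i := Finset.notMem_erase i J
  have e := tK_insert i (J.erase i) h'
  rw [Finset.insert_erase h] at e
  rw [e, smul_smul, ← Int.cast_mul, sgn_sq i _ h', Int.cast_one, one_smul]

lemma dgv_tK_mem (i : Fin N) (J : Finset (Fin N)) (h : i ∈ J) :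
    dgv 0 i (tK J) = ((sgn {i} (J.erase i) : ℤ) : ℂ) • tK (J.erase i) := by
  rw [tK_mem_decomp i J h, map_smul, dgv_xg_mul, if_pos rfl,
    dgv_tK_nmem i _ (Finset.notMem_erase i J), mul_zero, sub_zero]

lemma xg_mul_tK_mem (i : Fin N) (J : Finset (Fin N)) (h : i ∈ J) :
    xg i * tK J = 0 := by
  rw [tK_mem_decomp i J h, mul_smul_comm, ← mul_assoc, xg_sq, zero_mul, smul_zero]

/-- numerator product -/
def PP (m : ℤ) (r : ℕ) : ℂ := ∏ t ∈ Finset.range r, ((m : ℂ) - t)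

lemma PP_succ (m : ℤ) (r : ℕ) : PP m (r+1) = PP m r * ((m:ℂ) - r) := by
  rw [PP, Finset.prod_range_succ]; rfl

lemma PP_succ' (m : ℤ) (r : ℕ) : PP m (r+1) = (m:ℂ) * PP (m-1) r := by
  rw [PP, Finset.prod_range_succ', PP, Nat.cast_zero, sub_zero, mul_comm]
  congr 1
  apply Finset.prod_congr rfl
  intro t _
  push_cast
  ring

lemma genChoose_eq (m : ℤ) (r : ℕ) : genChoose m r = PP m r / (r.factorial : ℂ) := rfl

/-- `(r+1) * genChoose j (r+1) = j * genChoose (j-1) r` -/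
lemma coefB0 (j : ℤ) (r : ℕ) :
    ((r:ℂ)+1) * genChoose j (r+1) = (j:ℂ) * genChoose (j-1) r := by
  rw [genChoose_eq, genChoose_eq, PP_succ', Nat.factorial_succ]
  have hr : ((r.factorial : ℂ)) ≠ 0 := Nat.cast_ne_zero.mpr (Nat.factorial_ne_zero r)
  have hr1 : ((r:ℂ) + 1) ≠ 0 := by exact_mod_cast (Nat.cast_ne_zero (R := ℂ)).mpr r.succ_ne_zero
  push_cast
  field_simp

/-- main scalar identity A -/
lemma coefA (j a b : ℤ) (r : ℕ) :
    ((a:ℂ)+1) * (genChoose j r * izwC (j - r) (a+1) b)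
      = (j:ℂ) * (genChoose (j-1) r * izwC (j - 1 - r) a b) := by
  rw [izwC, izwC]
  have hcond : (0 ≤ b ∧ (a+1) + b = j - r) ↔ (0 ≤ b ∧ a + b = j - 1 - r) := by omega
  by_cases hc : 0 ≤ b ∧ a + b = j - 1 - r
  · rw [if_pos (hcond.mpr hc), if_pos hc]
    obtain ⟨hb, hab⟩ := hc
    set B := b.toNat with hB
    have hbB : (b : ℤ) = (B : ℤ) := (Int.toNat_of_nonneg hb).symm
    -- a + 1 = j - r - B
    have ha1 : ((a:ℂ)+1) = ((j:ℂ) - r - B) := by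
      have : a + 1 = j - r - B := by omega
      calc ((a:ℂ)+1) = (((a+1 : ℤ)):ℂ) := by push_cast; ring
        _ = (((j - r - B : ℤ)):ℂ) := by rw [this]
        _ = ((j:ℂ) - r - B) := by push_cast; ring
    rw [genChoose_eq, genChoose_eq, genChoose_eq, genChoose_eq]
    have e1 : PP (j - r) B * (((j - (r:ℤ) : ℤ):ℂ) - B) = ((j - (r:ℤ) : ℤ):ℂ) * PP (j - r - 1) B := by
      rw [← PP_succ, PP_succ']
    have e2 : PP j r * ((j:ℂ) - r) = (j:ℂ) * PP (j-1) r := by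
      rw [← PP_succ, PP_succ']
    have e3 : (j - (r:ℤ) - 1 : ℤ) = j - 1 - r := by ring
    rw [← e3]
    push_cast at e1
    have hkey : ((a:ℂ)+1) * (PP j r * PP (j - r) B)
        = (j:ℂ) * (PP (j-1) r * PP (j - r - 1) B) := by
      rw [ha1]
      linear_combination PP j r * e1 + PP (j - (r:ℤ) - 1) B * e2
    have hfac : ∀ x y : ℂ, ∀ p q : ℂ,
        x * (p / (r.factorial:ℂ) * ((-1:ℂ)^B * (q / (B.factorial:ℂ))))
          = (x * (p * q)) * ((-1:ℂ)^B / ((r.factorial:ℂ) * (B.factorial:ℂ))) := by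
      intro x y p q; ring
    rw [hfac ((a:ℂ)+1) 0, hfac (j:ℂ) 0, hkey]
  · rw [if_neg (fun hh => hc (hcond.mp hh)), if_neg hc, mul_zero, mul_zero, mul_zero, mul_zero]

end AuxLemmas


section MainAux
variable {N : ℕ}

/-- coefficient of the `r`-th term of `izwNK`. -/
def cc (j a b : ℤ) (r : ℕ) : ℂ := (-1:ℂ)^r * genChoose j r * izwC (j - r) a b

lemma izwNK_eq (j : ℤ) (J : Finset (Fin N)) (a b : ℤ) :
    izwNK N j J a b = ∑ r ∈ Finset.range (N+1), cc j a b r • (qq N ^ r * tK J) := rfl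

lemma ccD (j a b : ℤ) (r : ℕ) : ((a:ℂ)+1) * cc j (a+1) b r = (j:ℂ) * cc (j-1) a b r := by
  unfold cc
  linear_combination ((-1:ℂ)^r) * coefA j a b r

lemma ccB (j a b : ℤ) (r : ℕ) :
    ((r:ℂ)+1) * cc j a b (r+1) = -((j:ℂ) * cc (j-1) a b r) := by
  unfold cc
  have harg : j - ((r+1 : ℕ) : ℤ) = j - 1 - (r : ℤ) := by push_cast; ring
  rw [harg, pow_succ]
  linear_combination (-((-1:ℂ)^r) * izwC (j - 1 - (r:ℤ)) a b) * coefB0 j r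

lemma ccC (j a b : ℤ) (r : ℕ) :
    ((r:ℂ)+1) * cc j a b (r+1) + ((a:ℂ)+1) * cc j (a+1) b r = 0 := by
  rw [ccB, ccD]; ring

lemma qqN_mul_gv_mul (g : Fin 2) (i : Fin N) (y : Gr 2 N) :
    qq N ^ N * (gv g i * y) = 0 := by
  rw [← mul_assoc, ((qq_commute (gv g i)).pow_left N).eq, gv_mul_qq_pow_N, zero_mul]

lemma gv_mul_qq_pow_mul (g : Fin 2) (i : Fin N) (r : ℕ) (y : Gr 2 N) :
    gv g i * (qq N ^ r * y) = qq N ^ r * (gv g i * y) := by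
  rw [← mul_assoc, ← ((qq_commute (gv g i)).pow_left r).eq, mul_assoc]

lemma DZ_izwNK_eq (i : Fin N) (j : ℤ) (J : Finset (Fin N)) (a b : ℤ) :
    DZ i (izwNK N j J) a b
      = ∑ r ∈ Finset.range (N+1),
          cc j a b r • ((r:ℂ) • (qq N ^ (r-1) * (gv 1 i * tK J)) + qq N ^ r * dgv 0 i (tK J))
        + ∑ r ∈ Finset.range (N+1),
          (((a:ℂ)+1) * cc j (a+1) b r) • (qq N ^ r * (gv 0 i * tK J)) := by
  show dgv 0 i (izwNK N j J a b) + gv 0 i * (((a:ℂ)+1) • izwNK N j J (a+1) b) = _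
  rw [izwNK_eq, izwNK_eq, map_sum]
  congr 1
  · apply Finset.sum_congr rfl
    intro r _
    rw [map_smul, dgv_qq_pow_mul]
  · rw [Finset.smul_sum, Finset.mul_sum]
    apply Finset.sum_congr rfl
    intro r _
    rw [smul_smul, mul_smul_comm, gv_mul_qq_pow_mul]

end MainAux

set_option maxHeartbeats 1000000 in
/-- In the `N_K = N` setting, the super derivative of the odd binomial satisfies
`D^i_Z (Z-W)^{j|J} = σ(e_i, J∖e_i)(Z-W)^{j|J∖e_i} + j σ(e_i,J)(Z-W)^{j-1|J∪e_i}`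
for all `j ∈ ℤ` (the first term being zero when `i ∉ J`, and `σ(e_i,J) = 0` when
`i ∈ J`). -/
theorem stmt18 (N : ℕ) (i : Fin N) (j : ℤ) (J : Finset (Fin N)) :
    DZ i (izwNK N j J)
      = (if i ∈ J then ((sgn {i} (J.erase i) : ℂ)) • izwNK N j (J.erase i) else 0)
        + ((j : ℂ) * (sgn {i} J : ℂ)) • izwNK N (j - 1) (insert i J) := by
  by_cases h : i ∈ J
  · -- case i ∈ J
    rw [if_pos h]
    funext a b
    have hs0 : ((sgn {i} J : ℤ) : ℂ) = 0 := by
      rw [sgn, if_neg (fun hd => (Finset.disjoint_singleton_left.mp hd) h), Int.cast_zero]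
    show DZ i (izwNK N j J) a b
        = ((sgn {i} (J.erase i) : ℂ)) • izwNK N j (J.erase i) a b
          + ((j : ℂ) * (sgn {i} J : ℂ)) • izwNK N (j - 1) (insert i J) a b
    rw [hs0, mul_zero, zero_smul, add_zero, DZ_izwNK_eq, dgv_tK_mem i J h]
    have hT : gv 1 i * tK J = gv 0 i * tK J := by
      have h0 := xg_mul_tK_mem i J h
      unfold xg at h0
      rw [sub_mul, sub_eq_zero] at h0
      exact h0.symm
    rw [hT]
    have e1 : ∀ r ∈ Finset.range (N+1),
        cc j a b r • ((r:ℂ) • (qq N ^ (r-1) * (gv 0 i * tK J))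
            + qq N ^ r * (((sgn {i} (J.erase i) : ℤ):ℂ) • tK (J.erase i)))
          = (cc j a b r * r) • (qq N ^ (r-1) * (gv 0 i * tK J))
            + ((sgn {i} (J.erase i) : ℤ):ℂ) • (cc j a b r • (qq N ^ r * tK (J.erase i))) := by
      intro r _
      rw [smul_add, smul_smul, mul_smul_comm, smul_comm (cc j a b r)]
    rw [Finset.sum_congr rfl e1, Finset.sum_add_distrib, ← Finset.smul_sum, ← izwNK_eq]
    have key : (∑ r ∈ Finset.range (N+1),
          (cc j a b r * r) • (qq N ^ (r-1) * (gv 0 i * tK J)))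
        + ∑ r ∈ Finset.range (N+1),
          (((a:ℂ)+1) * cc j (a+1) b r) • (qq N ^ r * (gv 0 i * tK J)) = 0 := by
      rw [Finset.sum_range_succ'
          (fun r => (cc j a b r * r) • (qq N ^ (r-1) * (gv 0 i * tK J))),
        Finset.sum_range_succ, Nat.cast_zero, mul_zero, zero_smul, add_zero,
        qqN_mul_gv_mul, smul_zero, add_zero, ← Finset.sum_add_distrib]
      apply Finset.sum_eq_zero
      intro r _
      rw [Nat.add_sub_cancel, ← add_smul]
      have hcoef : cc j a b (r+1) * ((r+1 : ℕ) : ℂ) + ((a:ℂ)+1) * cc j (a+1) b r = 0 := by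
        have := ccC j a b r
        push_cast
        linear_combination this
      rw [hcoef, zero_smul]
    rw [add_right_comm, key, zero_add]
  · -- case i ∉ J
    rw [if_neg h, zero_add]
    funext a b
    show DZ i (izwNK N j J) a b
        = ((j : ℂ) * (sgn {i} J : ℂ)) • izwNK N (j - 1) (insert i J) a b
    rw [DZ_izwNK_eq, dgv_tK_nmem i J h]
    have e1 : ∀ r ∈ Finset.range (N+1),
        cc j a b r • ((r:ℂ) • (qq N ^ (r-1) * (gv 1 i * tK J)) + qq N ^ r * 0)
          = (cc j a b r * r) • (qq N ^ (r-1) * (gv 1 i * tK J)) := by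
      intro r _
      rw [mul_zero, add_zero, smul_smul]
    rw [Finset.sum_congr rfl e1]
    have hss : ((sgn {i} J : ℤ):ℂ) * ((sgn {i} J : ℤ):ℂ) = 1 := by
      rw [← Int.cast_mul, sgn_sq i J h, Int.cast_one]
    have hins : tK (insert i J) = ((sgn {i} J : ℤ):ℂ) • (xg i * tK J) := by
      rw [tK_insert i J h, smul_smul, hss, one_smul]
    rw [izwNK_eq, hins, Finset.smul_sum]
    have e2 : ∀ r ∈ Finset.range (N+1),
        ((j:ℂ) * ((sgn {i} J : ℤ):ℂ))
            • (cc (j-1) a b r • (qq N ^ r * (((sgn {i} J : ℤ):ℂ) • (xg i * tK J))))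
          = ((j:ℂ) * cc (j-1) a b r) • (qq N ^ r * (gv 0 i * tK J))
            - ((j:ℂ) * cc (j-1) a b r) • (qq N ^ r * (gv 1 i * tK J)) := by
      intro r _
      rw [mul_smul_comm, smul_smul, smul_smul,
        show (j:ℂ) * ((sgn {i} J : ℤ):ℂ) * cc (j-1) a b r * ((sgn {i} J : ℤ):ℂ)
            = ((j:ℂ) * cc (j-1) a b r) * (((sgn {i} J : ℤ):ℂ) * ((sgn {i} J : ℤ):ℂ)) by ring,
        hss, mul_one]
      unfold xg
      rw [sub_mul, mul_sub, smul_sub]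
    rw [Finset.sum_congr rfl e2, Finset.sum_sub_distrib]
    have eA : ∑ r ∈ Finset.range (N+1),
        (((a:ℂ)+1) * cc j (a+1) b r) • (qq N ^ r * (gv 0 i * tK J))
        = ∑ r ∈ Finset.range (N+1),
        ((j:ℂ) * cc (j-1) a b r) • (qq N ^ r * (gv 0 i * tK J)) := by
      apply Finset.sum_congr rfl
      intro r _
      rw [ccD]
    have eB : ∑ r ∈ Finset.range (N+1),
        (cc j a b r * r) • (qq N ^ (r-1) * (gv 1 i * tK J))
        = -∑ r ∈ Finset.range (N+1),
        ((j:ℂ) * cc (j-1) a b r) • (qq N ^ r * (gv 1 i * tK J)) := by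
      rw [Finset.sum_range_succ'
          (fun r => (cc j a b r * r) • (qq N ^ (r-1) * (gv 1 i * tK J))),
        Finset.sum_range_succ, Nat.cast_zero, mul_zero, zero_smul, add_zero,
        qqN_mul_gv_mul, smul_zero, add_zero, ← Finset.sum_neg_distrib]
      apply Finset.sum_congr rfl
      intro r _
      rw [Nat.add_sub_cancel, ← neg_smul]
      congr 1
      have := ccB j a b r
      push_cast
      linear_combination this
    rw [eA, eB]
    abel

end Stmt18
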